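/- arXiv:1505.07625 — 4 statements merged into one kernel-verified Lean document; each statement's English description precedes it below -/
import Mathlib

section
/- Let E be a finite-dimensional real inner product space, let p ≥ 2 and b > 0 be real numbers, and let β : E → ℝ be a twice continuously differentiable function with ‖∇β(x)‖ = 1 for every x ∈ E. Then the function g = e^{bβ} satisfies, at every point x ∈ E, the identity Δ_p g (x) = b^{p-1} e^{b(p-1)β(x)} ( Δβ(x) + b(p-1) ), where Δβ is the Laplacian of β. -/
open Real RealInnerProductSpace

/-- The divergence of a vector field `X : E → E` at `x`: the trace of its Fréchet
derivative at `x`. -/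
noncomputable def vectorDiv {E : Type*} [NormedAddCommGroup E] [InnerProductSpace ℝ E]
    (X : E → E) (x : E) : ℝ :=
  LinearMap.trace ℝ E (fderiv ℝ X x : E →ₗ[ℝ] E)

/-- The `p`-Laplacian `Δ_p u = div(‖∇u‖^{p-2} ∇u)`. -/
noncomputable def pLaplacian {E : Type*} [NormedAddCommGroup E] [InnerProductSpace ℝ E]
    [CompleteSpace E] (p : ℝ) (u : E → ℝ) : E → ℝ :=
  vectorDiv (fun x => ‖gradient u x‖ ^ (p - 2) • gradient u x)

/-- The Laplacian `Δu = div(∇u)`. -/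
noncomputable def laplacian {E : Type*} [NormedAddCommGroup E] [InnerProductSpace ℝ E]
    [CompleteSpace E] (u : E → ℝ) : E → ℝ :=
  vectorDiv (gradient u)

lemma trace_clm_smulRight {E : Type*} [NormedAddCommGroup E] [InnerProductSpace ℝ E]
    [FiniteDimensional ℝ E] (φ : E →L[ℝ] ℝ) (w : E) :
    LinearMap.trace ℝ E ((φ.smulRight w) : E →ₗ[ℝ] E) = φ w := by
  have h := congrFun (congrArg DFunLike.coe (LinearMap.trace_eq_contract ℝ E))
      ((φ : E →ₗ[ℝ] ℝ) ⊗ₜ[ℝ] w)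
  simp only [LinearMap.comp_apply, contractLeft_apply] at h
  have : ((φ.smulRight w) : E →ₗ[ℝ] E) = dualTensorHom ℝ E E ((φ : E →ₗ[ℝ] ℝ) ⊗ₜ[ℝ] w) := by
    ext v; simp [dualTensorHom_apply]
  rw [this, h]; rfl

theorem pLaplacian_exp_smul_busemann
    {E : Type*} [NormedAddCommGroup E] [InnerProductSpace ℝ E] [FiniteDimensional ℝ E]
    (p b : ℝ) (hp : 2 ≤ p) (hb : 0 < b)
    (β : E → ℝ) (hβ : ContDiff ℝ 2 β) (hβgrad : ∀ x, ‖gradient β x‖ = 1) (x : E) :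
    pLaplacian p (fun y => Real.exp (b * β y)) x
      = b ^ (p - 1) * Real.exp (b * (p - 1) * β x) * (laplacian β x + b * (p - 1)) := by
  have hβd : Differentiable ℝ β := hβ.differentiable (by norm_num)
  -- gradient of g := exp (b * β ·)
  have hg : ∀ y : E, HasGradientAt (fun z => Real.exp (b * β z))
      ((b * Real.exp (b * β y)) • gradient β y) y := by
    intro y
    have h1 : HasFDerivAt (fun z => b * β z) (b • fderiv ℝ β y) y :=
      ((hβd y).hasFDerivAt).const_mul b
    have h2 : HasFDerivAt (fun z => Real.exp (b * β z))
        (Real.exp (b * β y) • (b • fderiv ℝ β y)) y :=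
      by have := (Real.hasDerivAt_exp (b * β y)).comp_hasFDerivAt y h1; exact this
    rw [hasGradientAt_iff_hasFDerivAt]
    have hfd : fderiv ℝ β y = InnerProductSpace.toDual ℝ E (gradient β y) :=
      ((hβd y).hasGradientAt.hasFDerivAt).fderiv
    have h4 : (InnerProductSpace.toDual ℝ E) ((b * Real.exp (b * β y)) • gradient β y)
        = Real.exp (b * β y) • (b • fderiv ℝ β y) := by
      rw [map_smul, hfd, smul_smul, mul_comm b]
    rw [h4]; exact h2
  -- rewrite the p-Laplacian field
  have hfield : (fun y => ‖gradient (fun z => Real.exp (b * β z)) y‖ ^ (p - 2) •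
        gradient (fun z => Real.exp (b * β z)) y)
      = fun y => (b ^ (p - 1) * Real.exp (b * (p - 1) * β y)) • gradient β y := by
    funext y
    have hgy := (hg y).gradient
    rw [hgy]
    have hc : (0:ℝ) < b * Real.exp (b * β y) := mul_pos hb (Real.exp_pos _)
    rw [norm_smul, Real.norm_eq_abs, abs_of_pos hc, hβgrad y, mul_one, smul_smul]
    congr 1
    have : (b * Real.exp (b * β y)) ^ (p - 2) * (b * Real.exp (b * β y))
        = (b * Real.exp (b * β y)) ^ (p - 1) := by
      rw [show p - 1 = (p - 2) + 1 by ring, Real.rpow_add_one hc.ne']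
    rw [this, Real.mul_rpow hb.le (Real.exp_pos _).le, ← Real.exp_one_rpow (b * β y),
      ← Real.rpow_mul (Real.exp_pos 1).le, Real.exp_one_rpow,
      show b * β y * (p - 1) = b * (p - 1) * β y by ring]
  -- differentiability of gradient β
  have hgradd : Differentiable ℝ (gradient β) := by
    have h1 : ContDiff ℝ 1 (fderiv ℝ β) := hβ.fderiv_right (by norm_num)
    have : gradient β = fun y => (InnerProductSpace.toDual ℝ E).symm (fderiv ℝ β y) := rfl
    rw [this]
    exact fun y => ((InnerProductSpace.toDual ℝ E).symm.differentiable _).comp y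
      ((h1.differentiable one_ne_zero) y)
  -- derivative of the scalar coefficient
  set c : E → ℝ := fun y => b ^ (p - 1) * Real.exp (b * (p - 1) * β y) with hc_def
  have hc' : HasFDerivAt c
      ((b ^ (p - 1) * Real.exp (b * (p - 1) * β x) * (b * (p - 1))) • fderiv ℝ β x) x := by
    have h1 : HasFDerivAt (fun z => b * (p - 1) * β z) ((b * (p - 1)) • fderiv ℝ β x) x :=
      ((hβd x).hasFDerivAt).const_mul (b * (p - 1))
    have h2 : HasFDerivAt (fun z => Real.exp (b * (p - 1) * β z))
        (Real.exp (b * (p - 1) * β x) • ((b * (p - 1)) • fderiv ℝ β x)) x :=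
      by have := (Real.hasDerivAt_exp (b * (p - 1) * β x)).comp_hasFDerivAt x h1; exact this
    have h3 := h2.const_mul (b ^ (p - 1))
    rw [smul_smul, smul_smul] at h3
    exact h3
  -- derivative of the vector field
  have hV : HasFDerivAt (gradient β) (fderiv ℝ (gradient β) x) x := (hgradd x).hasFDerivAt
  have hX : HasFDerivAt (fun y => c y • gradient β y)
      (c x • fderiv ℝ (gradient β) x
        + ((b ^ (p - 1) * Real.exp (b * (p - 1) * β x) * (b * (p - 1))) •
            fderiv ℝ β x).smulRight (gradient β x)) x := hc'.smul hV
  have hfβ : fderiv ℝ β x (gradient β x) = 1 := by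
    have : fderiv ℝ β x = InnerProductSpace.toDual ℝ E (gradient β x) :=
      ((hβd x).hasGradientAt.hasFDerivAt).fderiv
    rw [this, InnerProductSpace.toDual_apply_apply, real_inner_self_eq_norm_sq, hβgrad x]
    norm_num
  rw [pLaplacian, hfield, vectorDiv, hX.fderiv]
  rw [ContinuousLinearMap.coe_add, ContinuousLinearMap.coe_smul, map_add, LinearMap.map_smul,
    trace_clm_smulRight]
  have hlap : LinearMap.trace ℝ E (fderiv ℝ (gradient β) x : E →ₗ[ℝ] E) = laplacian β x := rfl
  rw [hlap]
  simp only [ContinuousLinearMap.coe_smul', Pi.smul_apply, hfβ, smul_eq_mul, hc_def]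
  ring
end

section
/- Let E be a finite-dimensional real inner product space, let p ≥ 2 and a > 0 be real numbers, and set b = a/p. Let β : E → ℝ be a twice continuously differentiable function with ‖∇β(x)‖ = 1 for every x ∈ E and Δβ(x) ≥ -a for every x ∈ E. Then the function g = e^{bβ} satisfies the pointwise differential inequality Δ_p g (x) ≥ - b^p · g(x)^{p-1} for every x ∈ E. -/
open Real RealInnerProductSpace

section Helpers

variable {E : Type*} [NormedAddCommGroup E] [InnerProductSpace ℝ E] [FiniteDimensional ℝ E]

lemma trace_clm_smulRight_s1 (L : E →L[ℝ] ℝ) (v : E) :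
    LinearMap.trace ℝ E ((L.smulRight v : E →L[ℝ] E) : E →ₗ[ℝ] E) = L v := by
  have h : ((L.smulRight v : E →L[ℝ] E) : E →ₗ[ℝ] E)
      = dualTensorHom ℝ E E ((L : E →ₗ[ℝ] ℝ) ⊗ₜ[ℝ] v) := by
    ext u
    simp [dualTensorHom_apply]
  rw [h, LinearMap.trace_eq_contract_apply]
  simp

/-- Chain rule for gradients: `∇(φ ∘ f) = φ'(f x) • ∇f`. -/
lemma HasDerivAt.scomp' {f : E → ℝ} {G : E} {x : E} {φ : ℝ → ℝ} {d : ℝ}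
    (hφ : HasDerivAt φ d (f x)) (hf : HasGradientAt f G x) :
    HasGradientAt (fun y => φ (f y)) (d • G) x := by
  have h1 : HasFDerivAt f (InnerProductSpace.toDual ℝ E G) x := hf.hasFDerivAt
  have h3 := hφ.hasFDerivAt.comp x h1
  have he : (ContinuousLinearMap.toSpanSingleton ℝ d).comp
      (InnerProductSpace.toDual ℝ E G) = InnerProductSpace.toDual ℝ E (d • G) := by
    ext v
    simp [InnerProductSpace.toDual_apply_apply, real_inner_smul_left, mul_comm]
  rw [he] at h3
  have h4 := h3.hasGradientAt
  rw [(InnerProductSpace.toDual ℝ E).symm_apply_apply] at h4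
  exact h4

/-- Divergence of a scalar multiple of a vector field. -/
lemma vectorDiv_smul (f : E → ℝ) (X : E → E) (x : E)
    (hf : DifferentiableAt ℝ f x) (hX : DifferentiableAt ℝ X x) :
    vectorDiv (fun y => f y • X y) x = ⟪gradient f x, X x⟫ + f x * vectorDiv X x := by
  unfold vectorDiv
  rw [fderiv_fun_smul hf hX]
  have hgr : fderiv ℝ f x = InnerProductSpace.toDual ℝ E (gradient f x) :=
    hf.hasGradientAt.hasFDerivAt.fderiv
  push_cast [ContinuousLinearMap.coe_add, ContinuousLinearMap.coe_smul]
  rw [map_add, map_smul, trace_clm_smulRight_s1, hgr]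
  simp [InnerProductSpace.toDual_apply_apply, smul_eq_mul, add_comm]

end Helpers

theorem pLaplacian_exp_ge
    {E : Type*} [NormedAddCommGroup E] [InnerProductSpace ℝ E] [FiniteDimensional ℝ E]
    (p a b : ℝ) (hp : 2 ≤ p) (ha : 0 < a) (hb : b = a / p)
    (β : E → ℝ) (hβ : ContDiff ℝ 2 β) (hβgrad : ∀ x, ‖gradient β x‖ = 1)
    (hβlap : ∀ x, -a ≤ laplacian β x) (x : E) :
    pLaplacian p (fun y => Real.exp (b * β y)) x
      ≥ -b ^ p * Real.exp (b * β x) ^ (p - 1) := by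
  have hp0 : (0 : ℝ) < p := lt_of_lt_of_le two_pos hp
  have hb0 : 0 < b := hb ▸ div_pos ha hp0
  have hβd : Differentiable ℝ β := hβ.differentiable two_ne_zero
  set G : E → E := gradient β with hG
  -- gradient of β at each point
  have hGa : ∀ y, HasGradientAt β (G y) y := fun y => (hβd y).hasGradientAt
  -- G is C¹, hence differentiable
  have hGc : ContDiff ℝ 1 G := by
    have h1 : ContDiff ℝ 1 (fderiv ℝ β) := hβ.fderiv_right (le_refl _)
    have h2 : ContDiff ℝ 1 (fun L : E →L[ℝ] ℝ => (InnerProductSpace.toDual ℝ E).symm L) :=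
      (InnerProductSpace.toDual ℝ E).symm.toLinearIsometry.toContinuousLinearMap.contDiff
    exact h2.comp h1
  have hGd : Differentiable ℝ G := hGc.differentiable one_ne_zero
  -- gradient of the exponential
  have hgrad : ∀ y, HasGradientAt (fun z => Real.exp (b * β z))
      ((Real.exp (b * β y) * b) • G y) y := by
    intro y
    have hd : HasDerivAt (fun t : ℝ => Real.exp (b * t)) (Real.exp (b * β y) * b) (β y) := by
      simpa using ((hasDerivAt_id (β y)).const_mul b).exp
    exact hd.scomp' (hGa y)
  -- rewrite the field in the p-Laplacian
  set c : E → ℝ := fun y => b ^ (p - 1) * Real.exp ((p - 1) * b * β y) with hc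
  have hfield : (fun y => ‖gradient (fun z => Real.exp (b * β z)) y‖ ^ (p - 2) •
      gradient (fun z => Real.exp (b * β z)) y) = fun y => c y • G y := by
    funext y
    have hge : gradient (fun z => Real.exp (b * β z)) y = (Real.exp (b * β y) * b) • G y :=
      (hgrad y).gradient
    have hpos : 0 < Real.exp (b * β y) * b := mul_pos (Real.exp_pos _) hb0
    have hnorm : ‖(Real.exp (b * β y) * b) • G y‖ = Real.exp (b * β y) * b := by
      rw [norm_smul, hβgrad y, mul_one, Real.norm_eq_abs, abs_of_pos hpos]
    rw [hge, hnorm, smul_smul]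
    congr 1
    have h1 : (Real.exp (b * β y) * b) ^ (p - 2) * (Real.exp (b * β y) * b)
        = (Real.exp (b * β y) * b) ^ (p - 1) := by
      nth_rewrite 2 [← Real.rpow_one (Real.exp (b * β y) * b)]
      rw [← Real.rpow_add hpos]
      congr 1
      ring
    rw [h1, Real.mul_rpow (Real.exp_pos _).le hb0.le, ← Real.exp_mul, hc]
    ring_nf
  -- compute the p-Laplacian via vectorDiv_smul
  have hcd : DifferentiableAt ℝ c x := by
    apply DifferentiableAt.const_mul
    exact (Real.differentiable_exp.comp ((hβd.const_mul ((p - 1) * b)))).differentiableAt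
  have hdiv : pLaplacian p (fun y => Real.exp (b * β y)) x
      = ⟪gradient c x, G x⟫ + c x * laplacian β x := by
    rw [pLaplacian, hfield]
    exact vectorDiv_smul c G x hcd (hGd x)
  -- gradient of c
  have hcgrad : HasGradientAt c
      ((b ^ (p - 1) * (Real.exp ((p - 1) * b * β x) * ((p - 1) * b))) • G x) x := by
    have hd : HasDerivAt (fun t : ℝ => b ^ (p - 1) * Real.exp ((p - 1) * b * t))
        (b ^ (p - 1) * (Real.exp ((p - 1) * b * β x) * ((p - 1) * b))) (β x) := by
      simpa using (((hasDerivAt_id (β x)).const_mul ((p - 1) * b)).exp.const_mul (b ^ (p - 1)))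
    exact hd.scomp' (hGa x)
  have hinner : ⟪gradient c x, G x⟫
      = b ^ (p - 1) * Real.exp ((p - 1) * b * β x) * ((p - 1) * b) := by
    rw [hcgrad.gradient, real_inner_smul_left, real_inner_self_eq_norm_sq, hβgrad x]
    ring
  -- now the inequality
  set e : ℝ := Real.exp ((p - 1) * b * β x) with he
  have he0 : 0 < e := Real.exp_pos _
  have hbp : (0 : ℝ) < b ^ (p - 1) := Real.rpow_pos_of_pos hb0 _
  have hcx : c x = b ^ (p - 1) * e := rfl
  have hlb : c x * laplacian β x ≥ b ^ (p - 1) * e * (-a) := by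
    rw [hcx]
    exact mul_le_mul_of_nonneg_left (hβlap x) (by positivity)
  have hrhs : Real.exp (b * β x) ^ (p - 1) = e := by
    rw [← Real.exp_mul, he]
    ring_nf
  have hbp2 : b ^ (p - 1) * b = b ^ p := by
    nth_rewrite 2 [← Real.rpow_one b]
    rw [← Real.rpow_add hb0]
    norm_num
  have hab : a = p * b := by rw [hb]; field_simp
  calc pLaplacian p (fun y => Real.exp (b * β y)) x
      = b ^ (p - 1) * e * ((p - 1) * b) + c x * laplacian β x := by
        rw [hdiv, hinner]
    _ ≥ b ^ (p - 1) * e * ((p - 1) * b) + b ^ (p - 1) * e * (-a) := by linarith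
    _ = -(b ^ (p - 1) * b) * e := by rw [hab]; ring
    _ = -b ^ p * Real.exp (b * β x) ^ (p - 1) := by rw [hbp2, hrhs]
end

section
/- Let E be a finite-dimensional real inner product space, let p ≥ 2 and a > 0 be real numbers, and set b = a/p. Let β : E → ℝ be a twice continuously differentiable function with ‖∇β(x)‖ = 1 for every x ∈ E. If the function g = e^{bβ} satisfies Δ_p g (x) = - b^p · g(x)^{p-1} for every x ∈ E, then Δβ(x) = -a for every x ∈ E. -/
open Real RealInnerProductSpace

open InnerProductSpace in
lemma trace_smulRight_aux {E : Type*} [NormedAddCommGroup E] [InnerProductSpace ℝ E]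
    [FiniteDimensional ℝ E] (ℓ : E →ₗ[ℝ] ℝ) (v : E) :
    LinearMap.trace ℝ E (LinearMap.smulRight ℓ v) = ℓ v := by
  have h : LinearMap.smulRight ℓ v = dualTensorHom ℝ E E (ℓ ⊗ₜ v) := by ext u; rfl
  rw [h, LinearMap.trace_eq_contract_apply, contractLeft_apply]

theorem laplacian_eq_of_pLaplacian_exp_eq
    {E : Type*} [NormedAddCommGroup E] [InnerProductSpace ℝ E] [FiniteDimensional ℝ E]
    (p a b : ℝ) (hp : 2 ≤ p) (ha : 0 < a) (hb : b = a / p)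
    (β : E → ℝ) (hβ : ContDiff ℝ 2 β) (hβgrad : ∀ x, ‖gradient β x‖ = 1)
    (heq : ∀ x, pLaplacian p (fun y => Real.exp (b * β y)) x
      = -b ^ p * Real.exp (b * β x) ^ (p - 1)) :
    ∀ x, laplacian β x = -a := by
  intro x
  have hp0 : (0:ℝ) < p := by linarith
  have hbpos : (0:ℝ) < b := by rw [hb]; positivity
  have hβ1 : Differentiable ℝ β := hβ.differentiable (by norm_num)
  have hGdiff : Differentiable ℝ (gradient β) := by
    have h1 : ContDiff ℝ 1 (fderiv ℝ β) := hβ.fderiv_right (by norm_num)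
    exact fun y =>
      ((InnerProductSpace.toDual ℝ E).symm.differentiableAt).comp y ((h1.differentiable one_ne_zero) y)
  -- gradient of g
  have hgradg : ∀ y, gradient (fun z => Real.exp (b * β z)) y
      = (b * Real.exp (b * β y)) • gradient β y := by
    intro y
    have h1 : HasFDerivAt (fun z => b * β z) (b • fderiv ℝ β y) y :=
      ((hβ1 y).hasFDerivAt).const_mul b
    have h2 : HasFDerivAt (fun z => Real.exp (b * β z))
        ((b * Real.exp (b * β y)) • fderiv ℝ β y) y := by
      have := (Real.hasDerivAt_exp (b * β y)).comp_hasFDerivAt y h1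
      rw [show (b * Real.exp (b * β y)) • fderiv ℝ β y = Real.exp (b * β y) • b • fderiv ℝ β y by rw [smul_smul, mul_comm]]
      exact this
    rw [h2.hasGradientAt.gradient, map_smul]
    rfl
  -- the vector field of the p-Laplacian
  have hXeq : (fun y => ‖gradient (fun z => Real.exp (b * β z)) y‖ ^ (p - 2) •
        gradient (fun z => Real.exp (b * β z)) y)
      = fun y => (b ^ (p-1) * Real.exp ((p-1) * b * β y)) • gradient β y := by
    funext y
    have hbe : (0:ℝ) < b * Real.exp (b * β y) := by positivity
    rw [hgradg y, norm_smul, hβgrad y, smul_smul]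
    congr 1
    rw [Real.norm_eq_abs, abs_of_pos hbe, mul_one]
    have h1 : (b * Real.exp (b * β y)) ^ (p-1)
        = (b * Real.exp (b * β y)) ^ (p-2) * (b * Real.exp (b * β y)) := by
      rw [show p - 1 = (p-2) + 1 by ring, Real.rpow_add hbe, Real.rpow_one]
    rw [← h1, Real.mul_rpow hbpos.le (Real.exp_pos _).le, ← Real.exp_mul]
    ring_nf
  -- derivative of the scalar factor
  have hf : HasFDerivAt (fun y => b ^ (p-1) * Real.exp ((p-1) * b * β y))
      ((b ^ (p-1) * Real.exp ((p-1) * b * β x) * ((p-1) * b)) • fderiv ℝ β x) x := by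
    have h1 : HasFDerivAt (fun z => (p-1) * b * β z) (((p-1) * b) • fderiv ℝ β x) x :=
      ((hβ1 x).hasFDerivAt).const_mul ((p-1) * b)
    have h2 := (Real.hasDerivAt_exp ((p-1) * b * β x)).comp_hasFDerivAt x h1
    have h3 := h2.const_mul (b ^ (p-1))
    rw [show (b ^ (p-1) * Real.exp ((p-1) * b * β x) * ((p-1) * b)) • fderiv ℝ β x = b ^ (p-1) • Real.exp ((p-1) * b * β x) • ((p-1) * b) • fderiv ℝ β x by rw [smul_smul, smul_smul, mul_assoc]]
    exact h3
  have hV : HasFDerivAt (gradient β) (fderiv ℝ (gradient β) x) x := (hGdiff x).hasFDerivAt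
  have hXd := hf.smul hV
  have hF1 : (fderiv ℝ β x) (gradient β x) = 1 := by
    have h2 : ⟪(InnerProductSpace.toDual ℝ E).symm (fderiv ℝ β x), gradient β x⟫
        = (fderiv ℝ β x) (gradient β x) := InnerProductSpace.toDual_symm_apply
    have h3 : ⟪gradient β x, gradient β x⟫ = 1 := by
      rw [real_inner_self_eq_norm_mul_norm, hβgrad x]; ring
    rw [← h2]
    exact h3
  have hdiv : pLaplacian p (fun y => Real.exp (b * β y)) x
      = (b ^ (p-1) * Real.exp ((p-1) * b * β x)) * laplacian β x
        + b ^ (p-1) * Real.exp ((p-1) * b * β x) * ((p-1) * b) := by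
    have hco : ((((b ^ (p-1) * Real.exp ((p-1) * b * β x) * ((p-1) * b)) •
          fderiv ℝ β x).smulRight (gradient β x) : E →L[ℝ] E) : E →ₗ[ℝ] E)
        = LinearMap.smulRight
            (((b ^ (p-1) * Real.exp ((p-1) * b * β x) * ((p-1) * b)) •
              fderiv ℝ β x : E →L[ℝ] ℝ) : E →ₗ[ℝ] ℝ) (gradient β x) := by
      ext u; rfl
    unfold pLaplacian vectorDiv laplacian
    rw [hXeq, show (fun y => (b ^ (p-1) * Real.exp ((p-1) * b * β y)) • gradient β y) = (fun y => b ^ (p-1) * Real.exp ((p-1) * b * β y)) • gradient β from rfl, hXd.fderiv]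
    push_cast
    rw [map_add, map_smul, hco, trace_smulRight_aux]
    simp only [smul_eq_mul, ContinuousLinearMap.coe_smul, LinearMap.smul_apply,
      ContinuousLinearMap.coe_coe, hF1, mul_one]
    rfl
  have key := heq x
  rw [hdiv] at key
  have hE : Real.exp (b * β x) ^ (p-1) = Real.exp ((p-1) * b * β x) := by
    rw [← Real.exp_mul]; ring_nf
  rw [hE] at key
  have hEp : (0:ℝ) < Real.exp ((p-1) * b * β x) := Real.exp_pos _
  have hbp : b ^ p = b ^ (p-1) * b := by
    have h := Real.rpow_add hbpos (p-1) 1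
    rw [Real.rpow_one, show p - 1 + 1 = p by ring] at h
    exact h
  have hbppos : (0:ℝ) < b ^ (p-1) := Real.rpow_pos_of_pos hbpos _
  rw [hbp] at key
  have h0 : (b ^ (p-1) * Real.exp ((p-1) * b * β x)) * (laplacian β x + p * b) = 0 := by
    linear_combination key
  have h1 : laplacian β x = -(p * b) := by
    rcases mul_eq_zero.1 h0 with h | h
    · exact absurd h (ne_of_gt (mul_pos hbppos hEp))
    · linarith
  rw [h1, hb]
  field_simp
end

section
/- For every real number p ≥ 2 there exists a constant c > 0, depending only on p, such that for all vectors x and y in any real inner product space, ‖x + y‖^p ≤ ‖x‖^p + p · ‖x‖^{p-2} · ⟨x, y⟩ + c · ( ‖x‖^{p-2} ‖y‖^2 + ‖y‖^p ). -/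
open Real RealInnerProductSpace

universe u

set_option maxHeartbeats 1000000

private lemma pow_aux (m : ℕ) (u : ℝ) (h1 : 1 ≤ u) (h4 : u ≤ 4) :
    u ^ m ≤ 1 + (m : ℝ) * 4 ^ m * (u - 1) := by
  induction m with
  | zero => simp
  | succ n ih =>
    have hun : (0:ℝ) ≤ u ^ n := pow_nonneg (by linarith) n
    have h4n : (0:ℝ) ≤ (n:ℝ) * 4 ^ n := by positivity
    have hstep : u ^ (n + 1) = u ^ n * u := pow_succ u n
    have h4pos : (0:ℝ) < 4 ^ n := by positivity
    have hA : (0:ℝ) ≤ (4 - u) * ((n:ℝ) * 4 ^ n) * (u - 1) :=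
      mul_nonneg (mul_nonneg (by linarith) h4n) (by linarith)
    have h4ge1 : (1:ℝ) ≤ 4 ^ n := one_le_pow₀ (by norm_num)
    have hB : (0:ℝ) ≤ (4 * 4 ^ n - 1) * (u - 1) :=
      mul_nonneg (by linarith) (by linarith)
    have hmul : u ^ n * u ≤ (1 + (n:ℝ) * 4 ^ n * (u - 1)) * u :=
      mul_le_mul_of_nonneg_right ih (by linarith)
    have hmain : (1 + (n:ℝ) * 4 ^ n * (u - 1)) * u ≤ 1 + ((n:ℝ) + 1) * (4 ^ n * 4) * (u - 1) := by
      nlinarith [hA, hB]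
    calc u ^ (n + 1) = u ^ n * u := pow_succ u n
      _ ≤ (1 + (n:ℝ) * 4 ^ n * (u - 1)) * u := hmul
      _ ≤ 1 + ((n:ℝ) + 1) * (4 ^ n * 4) * (u - 1) := hmain
      _ = 1 + ((n + 1 : ℕ) : ℝ) * 4 ^ (n + 1) * (u - 1) := by push_cast; ring

private lemma bern (α u : ℝ) (hα : 1 ≤ α) (hu0 : 0 < u) :
    u ^ α ≤ 1 + α * (u ^ α / u) * (u - 1) := by
  have hs : (-1:ℝ) ≤ (1 - u) / u := by
    rw [le_div_iff₀ hu0]; linarith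
  have hB := one_add_mul_self_le_rpow_one_add hs hα
  have h1s : 1 + (1 - u) / u = u⁻¹ := by field_simp; ring
  rw [h1s, Real.inv_rpow hu0.le] at hB
  have hua : (0:ℝ) < u ^ α := Real.rpow_pos_of_pos hu0 α
  have h2 := mul_le_mul_of_nonneg_right hB hua.le
  rw [inv_mul_cancel₀ hua.ne'] at h2
  have key : (1 + α * ((1 - u) / u)) * u ^ α = u ^ α - α * (u ^ α / u) * (u - 1) := by
    field_simp; ring
  rw [key] at h2
  linarith

private lemma key_ineq (α : ℝ) (hα : 1 ≤ α) (τ : ℝ) (h1 : -1 ≤ τ) (h3 : τ ≤ 3) :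
    (1 + τ) ^ α ≤ 1 + α * τ + (α * (⌈α⌉₊ : ℝ) * 4 ^ (⌈α⌉₊)) * τ ^ 2 := by
  set m := ⌈α⌉₊ with hm
  have hαm : α ≤ (m : ℝ) := Nat.le_ceil α
  have hm1 : (1:ℝ) ≤ (m : ℝ) := le_trans hα hαm
  have h4m : (1:ℝ) ≤ 4 ^ m := one_le_pow₀ (by norm_num)
  rcases le_or_gt τ 0 with hτ | hτ
  · -- negative side
    have hK : (0:ℝ) ≤ (α * (m : ℝ) * 4 ^ m) * τ ^ 2 := by positivity
    rcases eq_or_lt_of_le h1 with h | h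
    · have hz : 1 + τ = 0 := by linarith
      rw [hz, Real.zero_rpow (by linarith : α ≠ 0)]
      nlinarith [mul_le_mul_of_nonneg_right (mul_le_mul hαm h4m (by norm_num) (by linarith)) (by nlinarith : (0:ℝ) ≤ τ^2)]
    · have hb0 : (0:ℝ) < 1 + τ := by linarith
      have hb1 : 1 + τ ≤ 1 := by linarith
      have hB := bern α (1 + τ) hα hb0
      have hsub : (1 + τ) ^ (α - 1) = (1 + τ) ^ α / (1 + τ) := by
        rw [Real.rpow_sub hb0, Real.rpow_one]
      have hmlow : 1 + (m : ℝ) * τ ≤ (1 + τ) ^ m := by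
        have := one_add_mul_le_pow (by linarith : (-2:ℝ) ≤ τ) m
        linarith
      have hum : (1 + τ) ^ ((m : ℝ) : ℝ) ≤ (1 + τ) ^ (α - 1) :=
        Real.rpow_le_rpow_of_exponent_ge hb0 hb1 (by linarith)
      rw [Real.rpow_natCast] at hum
      have hge : 1 + (m : ℝ) * τ ≤ (1 + τ) ^ (α - 1) := le_trans hmlow hum
      have hτα : α * τ ≤ 0 := mul_nonpos_of_nonneg_of_nonpos (by linarith) hτ
      have hmul := mul_le_mul_of_nonpos_left hge hτα
      have heq : 1 + α * ((1 + τ) ^ α / (1 + τ)) * (1 + τ - 1)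
          = 1 + (α * τ) * (1 + τ) ^ (α - 1) := by rw [hsub]; ring
      rw [heq] at hB
      have hKge : α * (m : ℝ) * τ ^ 2 ≤ (α * (m : ℝ) * 4 ^ m) * τ ^ 2 := by
        nlinarith [sq_nonneg τ, mul_nonneg (by linarith : (0:ℝ) ≤ α) (by linarith : (0:ℝ) ≤ (m:ℝ))]
      nlinarith [hB, hmul]
  · -- positive side
    set u := 1 + τ with hu
    have hu1 : (1:ℝ) ≤ u := by simp [hu]; linarith
    have hu4 : u ≤ 4 := by simp [hu]; linarith
    have hB := bern α u hα (by linarith)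
    have hub : u ^ (α - 1) ≤ u ^ (m : ℝ) :=
      Real.rpow_le_rpow_of_exponent_le hu1 (by linarith)
    have hnat : u ^ (m : ℝ) = u ^ m := Real.rpow_natCast u m
    have hpm := pow_aux m u hu1 hu4
    have hsub : u ^ (α - 1) = u ^ α / u := by
      rw [Real.rpow_sub (by linarith), Real.rpow_one]
    -- u^α ≤ 1 + α * u^(α-1) * τ, and u^(α-1) ≤ 1 + m 4^m τ
    have hchain : u ^ (α - 1) ≤ 1 + (m : ℝ) * 4 ^ m * τ := by
      rw [hsub] at hub ⊢
      calc u ^ α / u ≤ u ^ (m:ℝ) := hub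
        _ = u ^ m := hnat
        _ ≤ 1 + (m : ℝ) * 4 ^ m * (u - 1) := hpm
        _ = 1 + (m : ℝ) * 4 ^ m * τ := by rw [hu]; ring_nf
    rw [← hsub] at hB
    have hατ : (0:ℝ) ≤ α * τ := by positivity
    calc u ^ α ≤ 1 + α * u ^ (α - 1) * (u - 1) := hB
      _ = 1 + (α * τ) * u ^ (α - 1) := by rw [hu]; ring
      _ ≤ 1 + (α * τ) * (1 + (m : ℝ) * 4 ^ m * τ) :=
          by nlinarith [mul_le_mul_of_nonneg_left hchain hατ]
      _ = 1 + α * τ + (α * (m : ℝ) * 4 ^ m) * τ ^ 2 := by ring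

theorem norm_add_rpow_le
    (p : ℝ) (hp : 2 ≤ p) :
    ∃ c > (0 : ℝ), ∀ (F : Type u) [NormedAddCommGroup F] [InnerProductSpace ℝ F] (x y : F),
      ‖x + y‖ ^ p ≤ ‖x‖ ^ p + p * ‖x‖ ^ (p - 2) * ⟪x, y⟫
        + c * (‖x‖ ^ (p - 2) * ‖y‖ ^ (2 : ℝ) + ‖y‖ ^ p) := by
  have hα : (1:ℝ) ≤ p / 2 := by linarith
  set m := ⌈p / 2⌉₊ with hm
  set K : ℝ := p / 2 * (m : ℝ) * 4 ^ m with hKdef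
  have hK0 : (0:ℝ) ≤ K := by
    have : (0:ℝ) ≤ (m:ℝ) := Nat.cast_nonneg m
    have h4 : (0:ℝ) ≤ 4 ^ m := by positivity
    have : (0:ℝ) ≤ p / 2 := by linarith
    positivity
  have h2p : (0:ℝ) < 2 ^ p := Real.rpow_pos_of_pos two_pos p
  refine ⟨2 ^ p + p + p / 2 + 9 * K + 1, by linarith, ?_⟩
  intro F _ _ x y
  set c : ℝ := 2 ^ p + p + p / 2 + 9 * K + 1 with hcdef
  have hc0 : (0:ℝ) < c := by rw [hcdef]; linarith
  set a := ‖x‖ with hadef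
  set b := ‖y‖ with hbdef
  set t : ℝ := ⟪x, y⟫ with htdef
  have ha : 0 ≤ a := norm_nonneg x
  have hb : 0 ≤ b := norm_nonneg y
  have habs : |t| ≤ a * b := abs_real_inner_le_norm x y
  have hb2 : b ^ (2:ℝ) = b ^ 2 := by
    rw [show (2:ℝ) = ((2:ℕ):ℝ) by norm_num, Real.rpow_natCast]
  rw [hb2]
  have hnorm2 : ‖x + y‖ ^ 2 = a ^ 2 + 2 * t + b ^ 2 := norm_add_sq_real x y
  have hxyp : ‖x + y‖ ^ p = (a ^ 2 + 2 * t + b ^ 2) ^ (p / 2) := by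
    rw [← hnorm2, ← Real.rpow_natCast (‖x + y‖) 2, ← Real.rpow_mul (norm_nonneg _)]
    congr 1
    push_cast
    ring
  rcases le_or_gt a b with hab | hab
  · -- case a ≤ b
    have h1 : ‖x + y‖ ^ p ≤ (2 * b) ^ p :=
      Real.rpow_le_rpow (norm_nonneg _) (le_trans (norm_add_le x y) (by linarith)) (by linarith)
    rw [Real.mul_rpow (by norm_num) hb] at h1
    have e1 : a ^ (p - 2) ≤ b ^ (p - 2) := Real.rpow_le_rpow ha hab (by linarith)
    have e2 : a ^ (p - 2) * |t| ≤ b ^ (p - 2) * (b * b) := by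
      refine mul_le_mul e1 ?_ (abs_nonneg t) (Real.rpow_nonneg hb _)
      calc |t| ≤ a * b := habs
        _ ≤ b * b := mul_le_mul_of_nonneg_right hab hb
    have e3 : b ^ (p - 2) * (b * b) = b ^ p := by
      by_cases hb0 : b = 0
      · simp [hb0, Real.zero_rpow (by positivity : p ≠ 0)]
      · have hbpos : 0 < b := lt_of_le_of_ne hb (Ne.symm hb0)
        rw [show b * b = b ^ ((2:ℕ):ℝ) by rw [Real.rpow_natCast]; ring,
          ← Real.rpow_add hbpos]
        congr 1
        push_cast
        ring
    have ht : -(p * b ^ p) ≤ p * a ^ (p - 2) * t := by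
      have hp0 : (0:ℝ) ≤ p := by linarith
      have hPa : (0:ℝ) ≤ p * a ^ (p - 2) :=
        mul_nonneg hp0 (Real.rpow_nonneg ha _)
      have h5 := mul_le_mul_of_nonneg_left (neg_abs_le t) hPa
      have h6 := mul_le_mul_of_nonneg_left e2 hp0
      rw [e3] at h6
      nlinarith [h5, h6]
    have hcS : (2 ^ p + p) * b ^ p ≤ c * (a ^ (p - 2) * b ^ 2 + b ^ p) := by
      have hS : b ^ p ≤ a ^ (p - 2) * b ^ 2 + b ^ p := by
        have : (0:ℝ) ≤ a ^ (p - 2) * b ^ 2 :=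
          mul_nonneg (Real.rpow_nonneg ha _) (sq_nonneg b)
        linarith
      have hA : (2 ^ p + p) * b ^ p ≤ c * b ^ p :=
        mul_le_mul_of_nonneg_right (by rw [hcdef]; linarith) (Real.rpow_nonneg hb p)
      have hB := mul_le_mul_of_nonneg_left hS hc0.le
      linarith
    have hap : (0:ℝ) ≤ a ^ p := Real.rpow_nonneg ha p
    linarith [h1, ht, hcS, hap]
  · -- case b < a
    have ha0 : (0:ℝ) < a := lt_of_le_of_lt hb hab
    have ha2 : (0:ℝ) < a ^ 2 := by positivity
    set τ : ℝ := (2 * t + b ^ 2) / a ^ 2 with hτdef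
    have habs' := abs_le.mp habs
    have haτ : a ^ 2 * τ = 2 * t + b ^ 2 := by
      rw [hτdef]; field_simp
    have hbb : b * b ≤ a * a := mul_le_mul hab.le hab.le hb ha
    have hτ1 : -1 ≤ τ := by
      rw [hτdef, le_div_iff₀ ha2]
      linarith [sq_nonneg (a - b), habs'.1]
    have hτ3 : τ ≤ 3 := by
      rw [hτdef, div_le_iff₀ ha2]
      linarith [habs'.2, sq_nonneg (a - b), hbb]
    have hτpos : (0:ℝ) ≤ 1 + τ := by linarith
    have hkey := key_ineq (p / 2) hα τ hτ1 hτ3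
    rw [← hm, ← hKdef] at hkey
    have hsum : a ^ 2 + 2 * t + b ^ 2 = a ^ 2 * (1 + τ) := by
      rw [mul_add, mul_one, haτ]; ring
    have ha2p : ((a ^ 2 : ℝ)) ^ (p / 2) = a ^ p := by
      rw [← Real.rpow_natCast a 2, ← Real.rpow_mul ha0.le]
      congr 1
      push_cast
      ring
    have hF1 : ‖x + y‖ ^ p = a ^ p * (1 + τ) ^ (p / 2) := by
      rw [hxyp, hsum, Real.mul_rpow (sq_nonneg a) hτpos, ha2p]
    have hapden : a ^ p = a ^ (p - 2) * a ^ 2 := by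
      rw [← Real.rpow_natCast a 2, ← Real.rpow_add ha0]
      congr 1
      push_cast
      ring
    have hapτ : a ^ p * τ = a ^ (p - 2) * (2 * t + b ^ 2) := by
      rw [hapden, mul_assoc, haτ]
    have hXsq : (2 * t + b ^ 2) ^ 2 ≤ 9 * (a ^ 2 * b ^ 2) := by
      have f1 : (0:ℝ) ≤ 3 * (a * b) - (2 * t + b ^ 2) := by
        linarith [habs'.2, mul_nonneg hb (sub_nonneg.mpr hab.le)]
      have f2 : (0:ℝ) ≤ 3 * (a * b) + (2 * t + b ^ 2) := by
        linarith [habs'.1, mul_nonneg ha hb, sq_nonneg b]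
      nlinarith [mul_nonneg f1 f2]
    have hapτ2 : a ^ p * τ ^ 2 ≤ a ^ (p - 2) * (9 * b ^ 2) := by
      have h1 : a ^ 2 * τ ^ 2 ≤ 9 * b ^ 2 := by
        have h1' : a ^ 2 * τ ^ 2 = (2 * t + b ^ 2) ^ 2 / a ^ 2 := by
          rw [hτdef]; field_simp
        rw [h1', div_le_iff₀ ha2]
        linarith [hXsq]
      calc a ^ p * τ ^ 2 = a ^ (p - 2) * (a ^ 2 * τ ^ 2) := by rw [hapden]; ring
        _ ≤ a ^ (p - 2) * (9 * b ^ 2) :=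
            mul_le_mul_of_nonneg_left h1 (Real.rpow_nonneg ha _)
    have hmul := mul_le_mul_of_nonneg_left hkey (Real.rpow_nonneg ha p)
    have hF3 : a ^ p * (1 + p / 2 * τ + K * τ ^ 2)
        = a ^ p + p / 2 * (a ^ p * τ) + K * (a ^ p * τ ^ 2) := by ring
    have hKτ := mul_le_mul_of_nonneg_left hapτ2 hK0
    have hP2 : (0:ℝ) ≤ a ^ (p - 2) * b ^ 2 :=
      mul_nonneg (Real.rpow_nonneg ha _) (sq_nonneg b)
    have hbp : (0:ℝ) ≤ b ^ p := Real.rpow_nonneg hb p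
    have hcS : (p / 2 + 9 * K) * (a ^ (p - 2) * b ^ 2)
        ≤ c * (a ^ (p - 2) * b ^ 2 + b ^ p) := by
      have hc1 : (p / 2 + 9 * K) * (a ^ (p - 2) * b ^ 2) ≤ c * (a ^ (p - 2) * b ^ 2) :=
        mul_le_mul_of_nonneg_right (by rw [hcdef]; linarith) hP2
      have hc2 := mul_le_mul_of_nonneg_left (le_add_of_nonneg_right hbp :
        a ^ (p - 2) * b ^ 2 ≤ a ^ (p - 2) * b ^ 2 + b ^ p) hc0.le
      exact le_trans hc1 hc2
    have h7 : p / 2 * (a ^ p * τ) = p * (a ^ (p - 2) * t) + p / 2 * (a ^ (p - 2) * b ^ 2) := by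
      rw [hapτ]; ring
    rw [hF1]
    linarith [hmul, h7, hKτ, hcS]
end
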